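/- Let P and Ω be real symmetric positive semi-definite n×n matrices, M an invertible real n×n matrix, and Q a real symmetric positive semi-definite n×n matrix. Set P' = M(I + PΩ)⁻¹PMᵀ + Q. Then P' is symmetric positive semi-definite and, in the Loewner order, Q ≤ P' ≤ MPMᵀ + Q. -/

import Mathlib

open Matrix

private lemma psd_conj {n : ℕ} {A : Matrix (Fin n) (Fin n) ℝ} (hA : A.PosSemidef)
    (B : Matrix (Fin n) (Fin n) ℝ) : (B * A * Bᵀ).PosSemidef := by
  simpa [Matrix.conjTranspose_eq_transpose_of_trivial] using hA.mul_mul_conjTranspose_same B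

/-- One step of the Kalman filter covariance recurrence with model noise:
`P' = M * (I + P * Ω)⁻¹ * P * Mᵀ + Q` is symmetric positive semi-definite and,
in the Loewner order, `Q ≤ P' ≤ M * P * Mᵀ + Q`. -/
theorem kf_step_bounds {n : ℕ} (P Ω M Q : Matrix (Fin n) (Fin n) ℝ)
    (hP : P.PosSemidef) (hΩ : Ω.PosSemidef) (hM : IsUnit M) (hQ : Q.PosSemidef) :
    (M * (1 + P * Ω)⁻¹ * P * Mᵀ + Q).PosSemidef ∧
    ((M * (1 + P * Ω)⁻¹ * P * Mᵀ + Q) - Q).PosSemidef ∧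
    ((M * P * Mᵀ + Q) - (M * (1 + P * Ω)⁻¹ * P * Mᵀ + Q)).PosSemidef := by
  classical
  open scoped MatrixOrder in
  set S := CFC.sqrt P with hSdef
  open scoped MatrixOrder in
  have hS : S.PosSemidef := (CFC.sqrt_nonneg P).posSemidef
  open scoped MatrixOrder in
  have hSS : S * S = P := CFC.sqrt_mul_sqrt_self P hP.nonneg
  have hSt : Sᵀ = S := by
    simpa only [Matrix.conjTranspose_eq_transpose_of_trivial] using hS.isHermitian.eq
  set T := S * Ω * S with hT
  have hTpsd : T.PosSemidef := by
    have := psd_conj hΩ S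
    rwa [hSt] at this
  have hpd : (1 + T).PosDef := Matrix.PosDef.one.add_posSemidef hTpsd
  have hTt : Tᵀ = T := by
    simpa only [Matrix.conjTranspose_eq_transpose_of_trivial] using hTpsd.isHermitian.eq
  have hinvpd : ((1 + T)⁻¹).PosDef := hpd.inv
  have hdet1T : IsUnit (1 + T).det := hpd.det_pos.ne'.isUnit
  have h1 : (1 + T) * (1 + T)⁻¹ = 1 := Matrix.mul_nonsing_inv _ hdet1T
  have h2 : (1 + T)⁻¹ * (1 + T) = 1 := Matrix.nonsing_inv_mul _ hdet1T
  -- invertibility of 1 + P * Ω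
  have hdet : IsUnit (1 + P * Ω).det := by
    have hd : (1 + P * Ω).det = (1 + T).det := by
      rw [← hSS, Matrix.mul_assoc, Matrix.det_one_add_mul_comm, hT, Matrix.mul_assoc]
    rw [hd]; exact hdet1T
  -- key identity
  have hXid : (1 + P * Ω) * (S * (1 + T)⁻¹ * S) = P := by
    rw [← hSS]
    set J := (1 + T)⁻¹ with hJ
    have h1' : J + T * J = 1 := by
      have := h1; rwa [add_mul, one_mul] at this
    calc (1 + S * S * Ω) * (S * J * S)
        = S * (J + (S * Ω * S) * J) * S := by noncomm_ring
      _ = S * S := by rw [← hT, h1', Matrix.mul_one]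
  have hinvP : (1 + P * Ω)⁻¹ * P = S * (1 + T)⁻¹ * S := by
    calc (1 + P * Ω)⁻¹ * P
        = (1 + P * Ω)⁻¹ * ((1 + P * Ω) * (S * (1 + T)⁻¹ * S)) := by rw [hXid]
      _ = S * (1 + T)⁻¹ * S := by
          rw [← Matrix.mul_assoc, Matrix.nonsing_inv_mul _ hdet, one_mul]
  -- the middle matrix
  have hXpsd : (S * (1 + T)⁻¹ * S).PosSemidef := by
    have := psd_conj hinvpd.posSemidef S
    rwa [hSt] at this
  have hmidE : M * (1 + P * Ω)⁻¹ * P * Mᵀ = M * (S * (1 + T)⁻¹ * S) * Mᵀ := by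
    rw [Matrix.mul_assoc M, hinvP, Matrix.mul_assoc]
  have hmid : (M * (1 + P * Ω)⁻¹ * P * Mᵀ).PosSemidef := by
    rw [hmidE]; exact psd_conj hXpsd M
  refine ⟨hmid.add hQ, by simpa using hmid, ?_⟩
  -- upper bound: M*P*Mᵀ - M*X*Mᵀ = M*(P - X)*Mᵀ is PSD
  open scoped MatrixOrder in
  set R := CFC.sqrt T with hRdef
  open scoped MatrixOrder in
  have hR : R.PosSemidef := (CFC.sqrt_nonneg T).posSemidef
  open scoped MatrixOrder in
  have hRR : R * R = T := CFC.sqrt_mul_sqrt_self T hTpsd.nonneg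
  have hRt : Rᵀ = R := by
    simpa only [Matrix.conjTranspose_eq_transpose_of_trivial] using hR.isHermitian.eq
  have hRT : R * T = T * R := by rw [← hRR]; noncomm_ring
  have hRcomm : (1 + T)⁻¹ * R = R * (1 + T)⁻¹ := by
    have hc : R * (1 + T) = (1 + T) * R := by
      rw [mul_add, add_mul, mul_one, one_mul, hRT]
    have h3 := congrArg (fun X => (1 + T)⁻¹ * X * (1 + T)⁻¹) hc
    simp only [← Matrix.mul_assoc] at h3
    rw [h2, one_mul, Matrix.mul_assoc ((1 + T)⁻¹ * R), h1, Matrix.mul_one] at h3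
    exact h3
  have key : R * (1 + T)⁻¹ * R = T * (1 + T)⁻¹ := by
    conv_lhs => rw [Matrix.mul_assoc, hRcomm, ← Matrix.mul_assoc, hRR]
  have hone_sub : 1 - (1 + T)⁻¹ = R * (1 + T)⁻¹ * R := by
    have h1' : (1 + T)⁻¹ + T * (1 + T)⁻¹ = 1 := by
      have := h1; rwa [add_mul, one_mul] at this
    have hTinv : T * (1 + T)⁻¹ = 1 - (1 + T)⁻¹ := eq_sub_of_add_eq' h1'
    exact hTinv.symm.trans key.symm
  have hone_sub_psd : (1 - (1 + T)⁻¹).PosSemidef := by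
    rw [hone_sub]
    have := psd_conj hinvpd.posSemidef R
    rwa [hRt] at this
  have hPX : P - S * (1 + T)⁻¹ * S = S * (1 - (1 + T)⁻¹) * S := by
    rw [← hSS]; noncomm_ring
  have hPXpsd : (P - S * (1 + T)⁻¹ * S).PosSemidef := by
    rw [hPX]
    have := psd_conj hone_sub_psd S
    rwa [hSt] at this
  have hfinal : (M * P * Mᵀ + Q) - (M * (1 + P * Ω)⁻¹ * P * Mᵀ + Q)
      = M * (P - S * (1 + T)⁻¹ * S) * Mᵀ := by
    rw [hmidE]; noncomm_ring
  rw [hfinal]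
  exact psd_conj hPXpsd M
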